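/- For a numerical semigroup S and nonzero a ∈ S, the genus G(S) (the number of positive integers not in S) satisfies G(S) = (1/a)·(∑_{s ∈ Ap(S,a)} s) - (a-1)/2, i.e. 2a·G(S) = 2·∑_{s ∈ Ap(S,a)} s - a(a-1). -/
import Mathlib


/-- The Apéry set of a submonoid `S` of `ℕ` with respect to `a`. -/
def AperySet (S : AddSubmonoid ℕ) (a : ℕ) : Set ℕ :=
  {s | s ∈ S ∧ ∀ t ∈ S, t + a ≠ s}

/-- The genus of `S`: the number of natural numbers not in `S`. -/
noncomputable def Genus (S : AddSubmonoid ℕ) : ℕ :=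
  Set.ncard {n : ℕ | n ∉ S}

theorem genus_eq_apery_sum (S : AddSubmonoid ℕ)
    (hfin : ((S : Set ℕ))ᶜ.Finite) (a : ℕ) (haS : a ∈ S) (ha : 0 < a) :
    2 * a * Genus S + a * (a - 1) = 2 * ∑ᶠ s ∈ AperySet S a, s := by
  classical
  -- S is closed under adding multiples of a
  have hadd : ∀ s ∈ S, ∀ k : ℕ, s + k * a ∈ S := by
    intro s hs k
    induction k with
    | zero => simpa using hs
    | succ k ih =>
      have h : s + (k + 1) * a = s + k * a + a := by ring
      rw [h]
      exact S.add_mem ih haS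
  -- eventually everything is in S
  obtain ⟨M, hM⟩ : ∃ M : ℕ, ∀ n, M ≤ n → n ∈ S := by
    obtain ⟨M, hM⟩ := hfin.bddAbove
    refine ⟨M + 1, fun n hn => ?_⟩
    by_contra h
    exact absurd (hM (by simpa using h)) (by omega)
  have hex : ∀ i, i < a → ∃ n, n ∈ S ∧ n % a = i := by
    intro i hi
    refine ⟨i + M * a, hM _ ?_, ?_⟩
    · nlinarith
    · rw [Nat.add_mul_mod_self_right, Nat.mod_eq_of_lt hi]
  set w : ℕ → ℕ := fun i => sInf {n | n ∈ S ∧ n % a = i} with hwdef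
  have hwmem : ∀ i < a, w i ∈ S ∧ w i % a = i := fun i hi => Nat.sInf_mem (hex i hi)
  have hwle : ∀ i n, n ∈ S → n % a = i → w i ≤ n := fun i n hn hni => Nat.sInf_le ⟨hn, hni⟩
  -- key characterization within a residue class
  have hkey : ∀ i, i < a → ∀ n, n % a = i → (n ∈ S ↔ w i ≤ n) := by
    intro i hi n hni
    constructor
    · intro hn; exact hwle i n hn hni
    · intro hle
      have hmod : w i % a = i := (hwmem i hi).2
      have hdvd : a ∣ n - w i := (Nat.modEq_iff_dvd' hle).mp (by
        show w i % a = n % a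
        omega)
      obtain ⟨k, hk⟩ := hdvd
      have hka : a * k = k * a := by ring
      have hn' : n = w i + k * a := by omega
      rw [hn']
      exact hadd _ (hwmem i hi).1 k
  -- the Apéry set is the image of w on range a
  have hap : AperySet S a = ↑((Finset.range a).image w) := by
    ext s
    simp only [Finset.coe_image, Finset.coe_range, Set.mem_image, Set.mem_Iio, AperySet,
      Set.mem_setOf_eq]
    constructor
    · rintro ⟨hs, hmin⟩
      refine ⟨s % a, Nat.mod_lt _ ha, ?_⟩
      have hle := hwle (s % a) s hs rfl
      rcases eq_or_lt_of_le hle with h | h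
      · exact h
      · exfalso
        have hmod : w (s % a) % a = s % a := (hwmem _ (Nat.mod_lt _ ha)).2
        have hdvd : a ∣ s - w (s % a) := (Nat.modEq_iff_dvd' hle).mp (by
          show w (s % a) % a = s % a
          omega)
        obtain ⟨k, hk⟩ := hdvd
        have hk0 : k ≠ 0 := by rintro rfl; simp at hk; omega
        obtain ⟨k', rfl⟩ : ∃ k', k = k' + 1 := ⟨k - 1, by omega⟩
        have hexp : a * (k' + 1) = k' * a + a := by ring
        have hsa : s - a = w (s % a) + k' * a := by omega
        have ht : s - a ∈ S := by rw [hsa]; exact hadd _ (hwmem _ (Nat.mod_lt _ ha)).1 k'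
        exact hmin (s - a) ht (by omega)
    · rintro ⟨i, hi, rfl⟩
      refine ⟨(hwmem i hi).1, ?_⟩
      intro t ht heq
      have h1 : t % a = w i % a := by rw [← heq, Nat.add_mod_right]
      have h2 : t % a = i := by rw [h1, (hwmem i hi).2]
      have := hwle i t ht h2
      omega
  -- sum over the Apéry set
  have hsum : ∑ᶠ s ∈ AperySet S a, s = ∑ i ∈ Finset.range a, w i := by
    rw [hap, finsum_mem_coe_finset]
    refine Finset.sum_image ?_
    intro x hx y hy hxy
    have hx' := (hwmem x (Finset.mem_range.mp hx)).2
    have hy' := (hwmem y (Finset.mem_range.mp hy)).2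
    rw [hxy] at hx'
    omega
  -- genus as a finset card
  have hGc : Genus S = hfin.toFinset.card := by
    rw [Genus]
    have h1 : {n : ℕ | n ∉ S} = (↑S : Set ℕ)ᶜ := rfl
    rw [h1, Set.ncard_eq_toFinset_card _ hfin]
  have hcard : hfin.toFinset.card =
      ∑ i ∈ Finset.range a, (hfin.toFinset.filter (fun n => n % a = i)).card :=
    Finset.card_eq_sum_card_fiberwise (fun n _ => Finset.mem_range.mpr (Nat.mod_lt _ ha))
  have hfib : ∀ i, i < a → (hfin.toFinset.filter (fun n => n % a = i)) =
      (Finset.range (w i / a)).image (fun j => j * a + i) := by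
    intro i hi
    have hmod : w i % a = i := (hwmem i hi).2
    have hdm := Nat.div_add_mod (w i) a
    ext n
    simp only [Finset.mem_filter, Set.Finite.mem_toFinset, Set.mem_compl_iff, SetLike.mem_coe,
      Finset.mem_image, Finset.mem_range]
    constructor
    · rintro ⟨hnS, hni⟩
      have hlt : n < w i := by
        by_contra h
        exact hnS ((hkey i hi n hni).mpr (by omega))
      have hdn := Nat.div_add_mod n a
      refine ⟨n / a, ?_, ?_⟩
      · have : a * (n / a) < a * (w i / a) := by omega
        exact Nat.lt_of_mul_lt_mul_left this
      · have : n / a * a = a * (n / a) := by ring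
        omega
    · rintro ⟨j, hj, rfl⟩
      have hmodn : (j * a + i) % a = i := by
        rw [Nat.add_comm, Nat.add_mul_mod_self_right, Nat.mod_eq_of_lt hi]
      have hja : j * a < w i / a * a := (Nat.mul_lt_mul_right ha).mpr hj
      have hcomm : w i / a * a = a * (w i / a) := by ring
      have hlt : j * a + i < w i := by omega
      refine ⟨fun hS' => ?_, hmodn⟩
      have := (hkey i hi _ hmodn).mp hS'
      omega
  have hfibcard : ∀ i, i < a → (hfin.toFinset.filter (fun n => n % a = i)).card = w i / a := by
    intro i hi
    rw [hfib i hi, Finset.card_image_of_injective _ ?_, Finset.card_range]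
    intro x y hxy
    simp only at hxy
    have : x * a = y * a := by omega
    exact Nat.eq_of_mul_eq_mul_right ha this
  have hG : Genus S = ∑ i ∈ Finset.range a, w i / a := by
    rw [hGc, hcard]
    exact Finset.sum_congr rfl (fun i hi => hfibcard i (Finset.mem_range.mp hi))
  have hdm : ∀ i, i < a → w i = a * (w i / a) + i := by
    intro i hi
    have h := Nat.div_add_mod (w i) a
    have := (hwmem i hi).2
    omega
  have hsum2 : ∑ i ∈ Finset.range a, w i =
      a * (∑ i ∈ Finset.range a, w i / a) + ∑ i ∈ Finset.range a, i := by
    rw [Finset.mul_sum, ← Finset.sum_add_distrib]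
    exact Finset.sum_congr rfl (fun i hi => hdm i (Finset.mem_range.mp hi))
  have hgauss : 2 * ∑ i ∈ Finset.range a, i = a * (a - 1) := by
    have h := Finset.sum_range_id_mul_two a
    linarith
  rw [hsum, hsum2, hG, Nat.mul_add, ← hgauss]
  ring
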